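/- The kernel of the linear evaluation map from quadratic forms in ten variables x₀,…,x₉ to forms of degree 6 in s,t,u, given by substituting x₀=s³, x₁=t³, x₂=u³, x₃=s²t, x₄=t²u, x₅=u²s, x₆=st², x₇=tu², x₈=us², x₉=stu, has dimension 27. -/

import Mathlib

open MvPolynomial

/-- finrank of the homogeneous submodule over a finite variable set. -/
lemma finrank_homogeneousSubmodule (σ : Type*) [Fintype σ] [DecidableEq σ] (n : ℕ) :
    Module.finrank ℚ (homogeneousSubmodule σ ℚ n)
      = (Fintype.card σ + n - 1).choose n := by
  classical
  let S : Set (σ →₀ ℕ) := {d | d.degree = n}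
  let eS : Sym σ n ≃ S :=
    (Sym.equivNatSum σ n).trans (Equiv.subtypeEquivRight fun d => Iff.rfl)
  haveI : Fintype S := Fintype.ofEquiv _ eS
  let e : (homogeneousSubmodule σ ℚ n) ≃ₗ[ℚ] (S →₀ ℚ) :=
    (LinearEquiv.ofEq _ _ (homogeneousSubmodule_eq_finsupp_supported σ ℚ n)).trans
      (AddMonoidAlgebra.supportedEquivFinsupp S)
  rw [e.finrank_eq, Module.finrank_finsupp_self, ← Fintype.card_congr eS,
    Sym.card_sym_eq_choose]

lemma finiteDimensional_homogeneousSubmodule (σ : Type*) [Fintype σ] [DecidableEq σ] (n : ℕ) :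
    FiniteDimensional ℚ (homogeneousSubmodule σ ℚ n) := by
  classical
  let S : Set (σ →₀ ℕ) := {d | d.degree = n}
  let eS : Sym σ n ≃ S :=
    (Sym.equivNatSum σ n).trans (Equiv.subtypeEquivRight fun d => Iff.rfl)
  haveI : Fintype S := Fintype.ofEquiv _ eS
  let e : (homogeneousSubmodule σ ℚ n) ≃ₗ[ℚ] (S →₀ ℚ) :=
    (LinearEquiv.ofEq _ _ (homogeneousSubmodule_eq_finsupp_supported σ ℚ n)).trans
      (AddMonoidAlgebra.supportedEquivFinsupp S)
  exact Module.Finite.equiv e.symm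

lemma fin3_decomp (d : Fin 3 →₀ ℕ) :
    d = Finsupp.single 0 (d 0) + Finsupp.single 1 (d 1) + Finsupp.single 2 (d 2) := by
  ext x
  fin_cases x <;> simp [Finsupp.single_apply]

lemma fin3_degree (d : Fin 3 →₀ ℕ) : d.degree = d 0 + d 1 + d 2 := by
  rw [Finsupp.degree_eq_weight_one, Finsupp.weight_apply, Finsupp.sum_fintype]
  · simp [Fin.sum_univ_three]
  · intro; simp

/-- The kernel of the evaluation map from quadratic forms in `x₀,…,x₉` to sextic forms in
`s,t,u`, given by substituting the ten cubic monomials, has dimension 27. -/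
theorem kernel_of_substitution_dim_27 :
    let s : MvPolynomial (Fin 3) ℚ := X 0
    let t : MvPolynomial (Fin 3) ℚ := X 1
    let u : MvPolynomial (Fin 3) ℚ := X 2
    let f : Fin 10 → MvPolynomial (Fin 3) ℚ :=
      ![s^3, t^3, u^3, s^2*t, t^2*u, u^2*s, s*t^2, t*u^2, u*s^2, s*t*u]
    let φ : (homogeneousSubmodule (Fin 10) ℚ 2) →ₗ[ℚ] MvPolynomial (Fin 3) ℚ :=
      (aeval f).toLinearMap ∘ₗ (homogeneousSubmodule (Fin 10) ℚ 2).subtype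
    Module.finrank ℚ (LinearMap.ker φ) = 27 := by
  intro s t u f φ
  haveI : FiniteDimensional ℚ (homogeneousSubmodule (Fin 10) ℚ 2) :=
    finiteDimensional_homogeneousSubmodule _ _
  have hphi : ∀ (p : MvPolynomial (Fin 10) ℚ) (hp : p ∈ homogeneousSubmodule (Fin 10) ℚ 2),
      φ ⟨p, hp⟩ = aeval f p := fun _ _ => rfl
  have hX2 : ∀ i j : Fin 10, X i * X j ∈ homogeneousSubmodule (Fin 10) ℚ 2 :=
    fun i j => (isHomogeneous_X _ i).mul (isHomogeneous_X _ j)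
  have hf : ∀ i, (f i).IsHomogeneous 3 := by
    intro i
    fin_cases i
    · exact isHomogeneous_X_pow 0 3
    · exact isHomogeneous_X_pow 1 3
    · exact isHomogeneous_X_pow 2 3
    · exact (isHomogeneous_X_pow 0 2).mul (isHomogeneous_X _ 1)
    · exact (isHomogeneous_X_pow 1 2).mul (isHomogeneous_X _ 2)
    · exact (isHomogeneous_X_pow 2 2).mul (isHomogeneous_X _ 0)
    · exact (isHomogeneous_X _ 0).mul (isHomogeneous_X_pow 1 2)
    · exact (isHomogeneous_X _ 1).mul (isHomogeneous_X_pow 2 2)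
    · exact (isHomogeneous_X _ 2).mul (isHomogeneous_X_pow 0 2)
    · exact ((isHomogeneous_X _ 0).mul (isHomogeneous_X _ 1)).mul (isHomogeneous_X _ 2)
  have hrange : LinearMap.range φ = homogeneousSubmodule (Fin 3) ℚ 6 := by
    apply le_antisymm
    · rintro x ⟨⟨p, hp⟩, rfl⟩
      rw [hphi]
      have h2 : p.IsHomogeneous 2 := hp
      have := h2.aeval f hf
      norm_num at this
      exact this
    · rw [homogeneousSubmodule_eq_finsupp_supported, AddMonoidAlgebra.supported_eq_span_single,
        Submodule.span_le]
      rintro x ⟨c, hc, rfl⟩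
      obtain ⟨a, b, cc, rfl⟩ : ∃ a b cc,
          c = Finsupp.single 0 a + Finsupp.single 1 b + Finsupp.single 2 cc :=
        ⟨c 0, c 1, c 2, fin3_decomp c⟩
      have hc' : a + b + cc = 6 := by
        have := hc
        simp only [Set.mem_setOf_eq, fin3_degree] at this
        simpa [Finsupp.single_apply] using this
      have ha : a ≤ 6 := by omega
      have hb : b ≤ 6 := by omega
      have hcc : cc ≤ 6 := by omega
      interval_cases a <;> interval_cases b <;> interval_cases cc <;> try omega
      · -- (0,0,6)
        refine ⟨⟨X 2 * X 2, hX2 2 2⟩, ?_⟩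
        rw [hphi]
        simp only [map_mul, aeval_X, single_eq_monomial]
        show (X 2 ^ 3 : MvPolynomial (Fin 3) ℚ) * (X 2 ^ 3) = monomial _ 1
        simp only [add_assoc, monomial_single_add, ← X_pow_eq_monomial]
        ring
      · -- (0,1,5)
        refine ⟨⟨X 2 * X 7, hX2 2 7⟩, ?_⟩
        rw [hphi]
        simp only [map_mul, aeval_X, single_eq_monomial]
        show (X 2 ^ 3 : MvPolynomial (Fin 3) ℚ) * (X 1 * X 2 ^ 2) = monomial _ 1
        simp only [add_assoc, monomial_single_add, ← X_pow_eq_monomial]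
        ring
      · -- (0,2,4)
        refine ⟨⟨X 2 * X 4, hX2 2 4⟩, ?_⟩
        rw [hphi]
        simp only [map_mul, aeval_X, single_eq_monomial]
        show (X 2 ^ 3 : MvPolynomial (Fin 3) ℚ) * (X 1 ^ 2 * X 2) = monomial _ 1
        simp only [add_assoc, monomial_single_add, ← X_pow_eq_monomial]
        ring
      · -- (0,3,3)
        refine ⟨⟨X 1 * X 2, hX2 1 2⟩, ?_⟩
        rw [hphi]
        simp only [map_mul, aeval_X, single_eq_monomial]
        show (X 1 ^ 3 : MvPolynomial (Fin 3) ℚ) * (X 2 ^ 3) = monomial _ 1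
        simp only [add_assoc, monomial_single_add, ← X_pow_eq_monomial]
        ring
      · -- (0,4,2)
        refine ⟨⟨X 1 * X 7, hX2 1 7⟩, ?_⟩
        rw [hphi]
        simp only [map_mul, aeval_X, single_eq_monomial]
        show (X 1 ^ 3 : MvPolynomial (Fin 3) ℚ) * (X 1 * X 2 ^ 2) = monomial _ 1
        simp only [add_assoc, monomial_single_add, ← X_pow_eq_monomial]
        ring
      · -- (0,5,1)
        refine ⟨⟨X 1 * X 4, hX2 1 4⟩, ?_⟩
        rw [hphi]
        simp only [map_mul, aeval_X, single_eq_monomial]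
        show (X 1 ^ 3 : MvPolynomial (Fin 3) ℚ) * (X 1 ^ 2 * X 2) = monomial _ 1
        simp only [add_assoc, monomial_single_add, ← X_pow_eq_monomial]
        ring
      · -- (0,6,0)
        refine ⟨⟨X 1 * X 1, hX2 1 1⟩, ?_⟩
        rw [hphi]
        simp only [map_mul, aeval_X, single_eq_monomial]
        show (X 1 ^ 3 : MvPolynomial (Fin 3) ℚ) * (X 1 ^ 3) = monomial _ 1
        simp only [add_assoc, monomial_single_add, ← X_pow_eq_monomial]
        ring
      · -- (1,0,5)
        refine ⟨⟨X 2 * X 5, hX2 2 5⟩, ?_⟩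
        rw [hphi]
        simp only [map_mul, aeval_X, single_eq_monomial]
        show (X 2 ^ 3 : MvPolynomial (Fin 3) ℚ) * (X 2 ^ 2 * X 0) = monomial _ 1
        simp only [add_assoc, monomial_single_add, ← X_pow_eq_monomial]
        ring
      · -- (1,1,4)
        refine ⟨⟨X 2 * X 9, hX2 2 9⟩, ?_⟩
        rw [hphi]
        simp only [map_mul, aeval_X, single_eq_monomial]
        show (X 2 ^ 3 : MvPolynomial (Fin 3) ℚ) * (X 0 * X 1 * X 2) = monomial _ 1
        simp only [add_assoc, monomial_single_add, ← X_pow_eq_monomial]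
        ring
      · -- (1,2,3)
        refine ⟨⟨X 2 * X 6, hX2 2 6⟩, ?_⟩
        rw [hphi]
        simp only [map_mul, aeval_X, single_eq_monomial]
        show (X 2 ^ 3 : MvPolynomial (Fin 3) ℚ) * (X 0 * X 1 ^ 2) = monomial _ 1
        simp only [add_assoc, monomial_single_add, ← X_pow_eq_monomial]
        ring
      · -- (1,3,2)
        refine ⟨⟨X 1 * X 5, hX2 1 5⟩, ?_⟩
        rw [hphi]
        simp only [map_mul, aeval_X, single_eq_monomial]
        show (X 1 ^ 3 : MvPolynomial (Fin 3) ℚ) * (X 2 ^ 2 * X 0) = monomial _ 1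
        simp only [add_assoc, monomial_single_add, ← X_pow_eq_monomial]
        ring
      · -- (1,4,1)
        refine ⟨⟨X 1 * X 9, hX2 1 9⟩, ?_⟩
        rw [hphi]
        simp only [map_mul, aeval_X, single_eq_monomial]
        show (X 1 ^ 3 : MvPolynomial (Fin 3) ℚ) * (X 0 * X 1 * X 2) = monomial _ 1
        simp only [add_assoc, monomial_single_add, ← X_pow_eq_monomial]
        ring
      · -- (1,5,0)
        refine ⟨⟨X 1 * X 6, hX2 1 6⟩, ?_⟩
        rw [hphi]
        simp only [map_mul, aeval_X, single_eq_monomial]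
        show (X 1 ^ 3 : MvPolynomial (Fin 3) ℚ) * (X 0 * X 1 ^ 2) = monomial _ 1
        simp only [add_assoc, monomial_single_add, ← X_pow_eq_monomial]
        ring
      · -- (2,0,4)
        refine ⟨⟨X 2 * X 8, hX2 2 8⟩, ?_⟩
        rw [hphi]
        simp only [map_mul, aeval_X, single_eq_monomial]
        show (X 2 ^ 3 : MvPolynomial (Fin 3) ℚ) * (X 2 * X 0 ^ 2) = monomial _ 1
        simp only [add_assoc, monomial_single_add, ← X_pow_eq_monomial]
        ring
      · -- (2,1,3)
        refine ⟨⟨X 2 * X 3, hX2 2 3⟩, ?_⟩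
        rw [hphi]
        simp only [map_mul, aeval_X, single_eq_monomial]
        show (X 2 ^ 3 : MvPolynomial (Fin 3) ℚ) * (X 0 ^ 2 * X 1) = monomial _ 1
        simp only [add_assoc, monomial_single_add, ← X_pow_eq_monomial]
        ring
      · -- (2,2,2)
        refine ⟨⟨X 3 * X 7, hX2 3 7⟩, ?_⟩
        rw [hphi]
        simp only [map_mul, aeval_X, single_eq_monomial]
        show (X 0 ^ 2 * X 1 : MvPolynomial (Fin 3) ℚ) * (X 1 * X 2 ^ 2) = monomial _ 1
        simp only [add_assoc, monomial_single_add, ← X_pow_eq_monomial]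
        ring
      · -- (2,3,1)
        refine ⟨⟨X 1 * X 8, hX2 1 8⟩, ?_⟩
        rw [hphi]
        simp only [map_mul, aeval_X, single_eq_monomial]
        show (X 1 ^ 3 : MvPolynomial (Fin 3) ℚ) * (X 2 * X 0 ^ 2) = monomial _ 1
        simp only [add_assoc, monomial_single_add, ← X_pow_eq_monomial]
        ring
      · -- (2,4,0)
        refine ⟨⟨X 1 * X 3, hX2 1 3⟩, ?_⟩
        rw [hphi]
        simp only [map_mul, aeval_X, single_eq_monomial]
        show (X 1 ^ 3 : MvPolynomial (Fin 3) ℚ) * (X 0 ^ 2 * X 1) = monomial _ 1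
        simp only [add_assoc, monomial_single_add, ← X_pow_eq_monomial]
        ring
      · -- (3,0,3)
        refine ⟨⟨X 0 * X 2, hX2 0 2⟩, ?_⟩
        rw [hphi]
        simp only [map_mul, aeval_X, single_eq_monomial]
        show (X 0 ^ 3 : MvPolynomial (Fin 3) ℚ) * (X 2 ^ 3) = monomial _ 1
        simp only [add_assoc, monomial_single_add, ← X_pow_eq_monomial]
        ring
      · -- (3,1,2)
        refine ⟨⟨X 0 * X 7, hX2 0 7⟩, ?_⟩
        rw [hphi]
        simp only [map_mul, aeval_X, single_eq_monomial]
        show (X 0 ^ 3 : MvPolynomial (Fin 3) ℚ) * (X 1 * X 2 ^ 2) = monomial _ 1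
        simp only [add_assoc, monomial_single_add, ← X_pow_eq_monomial]
        ring
      · -- (3,2,1)
        refine ⟨⟨X 0 * X 4, hX2 0 4⟩, ?_⟩
        rw [hphi]
        simp only [map_mul, aeval_X, single_eq_monomial]
        show (X 0 ^ 3 : MvPolynomial (Fin 3) ℚ) * (X 1 ^ 2 * X 2) = monomial _ 1
        simp only [add_assoc, monomial_single_add, ← X_pow_eq_monomial]
        ring
      · -- (3,3,0)
        refine ⟨⟨X 0 * X 1, hX2 0 1⟩, ?_⟩
        rw [hphi]
        simp only [map_mul, aeval_X, single_eq_monomial]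
        show (X 0 ^ 3 : MvPolynomial (Fin 3) ℚ) * (X 1 ^ 3) = monomial _ 1
        simp only [add_assoc, monomial_single_add, ← X_pow_eq_monomial]
        ring
      · -- (4,0,2)
        refine ⟨⟨X 0 * X 5, hX2 0 5⟩, ?_⟩
        rw [hphi]
        simp only [map_mul, aeval_X, single_eq_monomial]
        show (X 0 ^ 3 : MvPolynomial (Fin 3) ℚ) * (X 2 ^ 2 * X 0) = monomial _ 1
        simp only [add_assoc, monomial_single_add, ← X_pow_eq_monomial]
        ring
      · -- (4,1,1)
        refine ⟨⟨X 0 * X 9, hX2 0 9⟩, ?_⟩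
        rw [hphi]
        simp only [map_mul, aeval_X, single_eq_monomial]
        show (X 0 ^ 3 : MvPolynomial (Fin 3) ℚ) * (X 0 * X 1 * X 2) = monomial _ 1
        simp only [add_assoc, monomial_single_add, ← X_pow_eq_monomial]
        ring
      · -- (4,2,0)
        refine ⟨⟨X 0 * X 6, hX2 0 6⟩, ?_⟩
        rw [hphi]
        simp only [map_mul, aeval_X, single_eq_monomial]
        show (X 0 ^ 3 : MvPolynomial (Fin 3) ℚ) * (X 0 * X 1 ^ 2) = monomial _ 1
        simp only [add_assoc, monomial_single_add, ← X_pow_eq_monomial]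
        ring
      · -- (5,0,1)
        refine ⟨⟨X 0 * X 8, hX2 0 8⟩, ?_⟩
        rw [hphi]
        simp only [map_mul, aeval_X, single_eq_monomial]
        show (X 0 ^ 3 : MvPolynomial (Fin 3) ℚ) * (X 2 * X 0 ^ 2) = monomial _ 1
        simp only [add_assoc, monomial_single_add, ← X_pow_eq_monomial]
        ring
      · -- (5,1,0)
        refine ⟨⟨X 0 * X 3, hX2 0 3⟩, ?_⟩
        rw [hphi]
        simp only [map_mul, aeval_X, single_eq_monomial]
        show (X 0 ^ 3 : MvPolynomial (Fin 3) ℚ) * (X 0 ^ 2 * X 1) = monomial _ 1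
        simp only [add_assoc, monomial_single_add, ← X_pow_eq_monomial]
        ring
      · -- (6,0,0)
        refine ⟨⟨X 0 * X 0, hX2 0 0⟩, ?_⟩
        rw [hphi]
        simp only [map_mul, aeval_X, single_eq_monomial]
        show (X 0 ^ 3 : MvPolynomial (Fin 3) ℚ) * (X 0 ^ 3) = monomial _ 1
        simp only [add_assoc, monomial_single_add, ← X_pow_eq_monomial]
        ring
  have h55 : Module.finrank ℚ (homogeneousSubmodule (Fin 10) ℚ 2) = 55 := by
    rw [finrank_homogeneousSubmodule]; rfl
  have h28 : Module.finrank ℚ (homogeneousSubmodule (Fin 3) ℚ 6) = 28 := by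
    rw [finrank_homogeneousSubmodule]; rfl
  have hrn := LinearMap.finrank_range_add_finrank_ker φ
  rw [hrange, h28, h55] at hrn
  omega
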